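/- Suppose s ∈ M corresponds to a reduced monomial with Cartier–Foata normal form s_1⋯s_p, and s is not left reducible. Then for 1 ≤ i < p: (i) if E_0 occurs in s_{i+1} then E_1 occurs in s_i; (ii) if E_n occurs in s_{i+1} then E_{n−1} occurs in s_i; (iii) if 0 < j < n and E_j occurs in s_{i+1}, then both E_{j−1} and E_{j+1} occur in s_i. -/

import Mathlib

open FreeAlgebra

/-- The six parameters `δ, δ_L, δ_R, κ_L, κ_R, κ_{LR}` of the symplectic blob algebra. -/
structure Params (k : Type*) where
  δ : k
  δL : k
  δR : k
  κL : k
  κR : k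
  κLR : k

/-- The word `I`: the product of the odd-indexed generators `E_1 E_3 ⋯`. -/
def Iword (n : ℕ) : List (Fin (n + 1)) :=
  (List.finRange (n + 1)).filter (fun i => i.val % 2 = 1)

/-- The word `J`: the product of the even-indexed generators `E_0 E_2 ⋯`. -/
def Jword (n : ℕ) : List (Fin (n + 1)) :=
  (List.finRange (n + 1)).filter (fun i => i.val % 2 = 0)

/-- The monomial in the free algebra corresponding to a word in the generators. -/
def wordProd (k : Type*) [CommRing k] {n : ℕ} (u : List (Fin (n + 1))) :
    FreeAlgebra k (Fin (n + 1)) :=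
  (u.map (FreeAlgebra.ι k)).prod

/-- The defining relations of the algebra `A_n` (the quotient of the two boundary
Temperley–Lieb algebra by the topological relations `IJI = κ_{LR} I`, `JIJ = κ_{LR} J`),
with `E = E_0` and `F = E_n`. -/
inductive SBRel {k : Type*} [CommRing k] {n : ℕ} (p : Params k) :
    FreeAlgebra k (Fin (n + 1)) → FreeAlgebra k (Fin (n + 1)) → Prop
  | comm (i j : Fin (n + 1)) (h : i.val + 1 < j.val) :
      SBRel p (ι k i * ι k j) (ι k j * ι k i)
  | left_sq :
      SBRel p (ι k (0 : Fin (n + 1)) * ι k 0) (p.δL • ι k (0 : Fin (n + 1)))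
  | right_sq :
      SBRel p (ι k (Fin.last n) * ι k (Fin.last n)) (p.δR • ι k (Fin.last n))
  | mid_sq (i : Fin (n + 1)) (h1 : 1 ≤ i.val) (h2 : i.val < n) :
      SBRel p (ι k i * ι k i) (p.δ • ι k i)
  | left_braid (i j : Fin (n + 1)) (hi : i.val = 1) (hj : j.val = 0) :
      SBRel p (ι k i * ι k j * ι k i) (p.κL • ι k i)
  | right_braid (i j : Fin (n + 1)) (hi : i.val + 1 = n) (hj : j.val = n) :
      SBRel p (ι k i * ι k j * ι k i) (p.κR • ι k i)
  | braid_up (i j : Fin (n + 1)) (h : i.val + 1 = j.val) (h1 : 1 ≤ i.val) (h2 : j.val < n) :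
      SBRel p (ι k i * ι k j * ι k i) (ι k i)
  | braid_down (i j : Fin (n + 1)) (h : i.val + 1 = j.val) (h1 : 1 ≤ i.val) (h2 : j.val < n) :
      SBRel p (ι k j * ι k i * ι k j) (ι k j)
  | topI :
      SBRel p (wordProd k (Iword n ++ Jword n ++ Iword n)) (p.κLR • wordProd k (Iword n))
  | topJ :
      SBRel p (wordProd k (Jword n ++ Iword n ++ Jword n)) (p.κLR • wordProd k (Jword n))

/-- The presented algebra `A_n`. -/
def SBAlg (k : Type*) [CommRing k] (n : ℕ) (p : Params k) :=
  RingQuot (SBRel (k := k) (n := n) p)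

noncomputable instance (k : Type*) [CommRing k] (n : ℕ) (p : Params k) :
    Ring (SBAlg k n p) := inferInstanceAs (Ring (RingQuot (SBRel p)))

noncomputable instance (k : Type*) [CommRing k] (n : ℕ) (p : Params k) :
    Algebra k (SBAlg k n p) := inferInstanceAs (Algebra k (RingQuot (SBRel p)))

/-- The image of a word in the generators in the algebra `A_n`. -/
noncomputable def algWord {k : Type*} [CommRing k] {n : ℕ} (p : Params k)
    (u : List (Fin (n + 1))) : SBAlg k n p :=
  RingQuot.mkAlgHom k (SBRel p) (wordProd k u)

/-- The generator `E_i` of `A_n`. -/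
noncomputable def gen {k : Type*} [CommRing k] {n : ℕ} (p : Params k) (i : Fin (n + 1)) :
    SBAlg k n p :=
  RingQuot.mkAlgHom k (SBRel p) (ι k i)

/-- A monomial `u` in the generators is *reduced* if it cannot be expressed, using the
relations, as a scalar multiple of a strictly shorter monomial. -/
def Reduced {k : Type*} [CommRing k] {n : ℕ} (p : Params k) (u : List (Fin (n + 1))) :
    Prop :=
  ∀ (v : List (Fin (n + 1))) (c : k), v.length < u.length → algWord p u ≠ c • algWord p v

/-- The generators `E_i` and `E_j` do not commute: `|i - j| = 1`. -/
def Adj {n : ℕ} (i j : Fin (n + 1)) : Prop :=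
  i.val + 1 = j.val ∨ j.val + 1 = i.val

/-- Generators `E_i`, `E_j` commute in the commutation monoid iff `|i - j| > 1`. -/
def Distant {n : ℕ} (i j : Fin (n + 1)) : Prop :=
  i.val + 1 < j.val ∨ j.val + 1 < i.val

/-- The commutation relation on the free monoid on `E_0, …, E_n`. -/
def CommRel (n : ℕ) : FreeMonoid (Fin (n + 1)) → FreeMonoid (Fin (n + 1)) → Prop :=
  fun x y => ∃ i j : Fin (n + 1), Distant i j ∧
    x = FreeMonoid.of i * FreeMonoid.of j ∧ y = FreeMonoid.of j * FreeMonoid.of i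

/-- The commutation monoid `M` on generators `E_0, …, E_n`. -/
def CMon (n : ℕ) := (conGen (CommRel n)).Quotient

instance (n : ℕ) : Monoid (CMon n) :=
  inferInstanceAs (Monoid (conGen (CommRel n)).Quotient)

/-- The image in `M` of a word in the generators. -/
def mkW {n : ℕ} (u : List (Fin (n + 1))) : CMon n :=
  Con.mk' _ (FreeMonoid.ofList u)

/-- A column of a Cartier–Foata factorization: a nonempty set of distinct,
pairwise commuting generators. -/
def GoodCol {n : ℕ} (s : Finset (Fin (n + 1))) : Prop :=
  s.Nonempty ∧ ∀ i ∈ s, ∀ j ∈ s, i ≠ j → Distant i j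

/-- The product in `M` of a set of (pairwise commuting) generators. -/
def colProd {n : ℕ} (s : Finset (Fin (n + 1))) : CMon n :=
  mkW (s.sort (· ≤ ·))

/-- A Cartier–Foata factorization. -/
def IsCF {n : ℕ} (L : List (Finset (Fin (n + 1)))) : Prop :=
  (∀ s ∈ L, GoodCol s) ∧
    L.Chain' (fun s t => ∀ j ∈ t, ∃ i ∈ s, ¬ Distant i j)

/-- An element of `M` corresponds to a reduced monomial if some (equivalently, any)
representative word is reduced with respect to the relations of `A_n`. -/
def ReducedM {k : Type*} [CommRing k] {n : ℕ} (p : Params k) (x : CMon n) : Prop :=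
  ∃ u : List (Fin (n + 1)), mkW u = x ∧ Reduced p u

/-- `x` is left reducible: it is commutation equivalent to a word `s t v` with `s`, `t`
noncommuting generators and `t ∉ {E_0, E_n}`. -/
def LeftReducible {n : ℕ} (x : CMon n) : Prop :=
  ∃ (a b : Fin (n + 1)) (v : List (Fin (n + 1))),
    Adj a b ∧ b ≠ 0 ∧ b ≠ Fin.last n ∧ x = mkW (a :: b :: v)

/-- `x` is right reducible: it is commutation equivalent to a word `v t s` with `s`, `t`
noncommuting generators and `t ∉ {E_0, E_n}`. -/
def RightReducible {n : ℕ} (x : CMon n) : Prop :=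
  ∃ (a b : Fin (n + 1)) (v : List (Fin (n + 1))),
    Adj a b ∧ b ≠ 0 ∧ b ≠ Fin.last n ∧ x = mkW (v ++ [b, a])

section Basic
variable {n : ℕ}

lemma distant_symm {i j : Fin (n+1)} (h : Distant i j) : Distant j i := h.symm

lemma mkW_nil : mkW ([] : List (Fin (n+1))) = 1 := rfl

lemma mkW_append (u v : List (Fin (n+1))) : mkW (u ++ v) = mkW u * mkW v := by
  unfold mkW
  rw [show FreeMonoid.ofList (u ++ v) = FreeMonoid.ofList u * FreeMonoid.ofList v from rfl,
    map_mul]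
  rfl

lemma mkW_congr_cons (a : Fin (n+1)) {l l' : List (Fin (n+1))} (h : mkW l = mkW l') :
    mkW (a :: l) = mkW (a :: l') := by
  rw [show a::l = [a]++l from rfl, show a::l' = [a]++l' from rfl, mkW_append, mkW_append, h]

lemma mkW_congr_append (w : List (Fin (n+1))) {l l' : List (Fin (n+1))} (h : mkW l = mkW l') :
    mkW (w ++ l) = mkW (w ++ l') := by
  rw [mkW_append, mkW_append, h]

lemma mkW_swap {i j : Fin (n+1)} (h : Distant i j) (w1 w2 : List (Fin (n+1))) :
    mkW (w1 ++ i :: j :: w2) = mkW (w1 ++ j :: i :: w2) := by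
  have base : mkW [i, j] = mkW [j, i] := by
    unfold mkW
    exact (Con.eq _).mpr (ConGen.Rel.of _ _ ⟨i, j, h, rfl, rfl⟩)
  apply mkW_congr_append
  rw [show i :: j :: w2 = [i,j] ++ w2 from rfl, show j :: i :: w2 = [j,i] ++ w2 from rfl,
    mkW_append, mkW_append, base]

lemma mkW_swap0 {i j : Fin (n+1)} (h : Distant i j) (w2 : List (Fin (n+1))) :
    mkW (i :: j :: w2) = mkW (j :: i :: w2) := mkW_swap h [] w2

/-- move a letter from the end to the front past letters it commutes with -/
lemma mkW_move {b : Fin (n+1)} : ∀ {l : List (Fin (n+1))}, (∀ c ∈ l, Distant c b) →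
    mkW (l ++ [b]) = mkW (b :: l) := by
  intro l
  induction l with
  | nil => intro _; rfl
  | cons a t ih =>
    intro h
    calc mkW ((a :: t) ++ [b]) = mkW (a :: (t ++ [b])) := rfl
    _ = mkW (a :: b :: t) := mkW_congr_cons a (ih (fun c hc => h c (List.mem_cons_of_mem _ hc)))
    _ = mkW (b :: a :: t) := mkW_swap0 (h a (List.mem_cons_self)) t
end Basic
section Basic2
variable {n : ℕ}

/-- permutation invariance for lists of pairwise commuting letters -/
lemma mkW_perm : ∀ {l1 l2 : List (Fin (n+1))}, l1.Perm l2 →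
    (∀ a ∈ l1, ∀ b ∈ l1, a ≠ b → Distant a b) → mkW l1 = mkW l2 := by
  intro l1 l2 hp
  induction hp with
  | nil => intro _; rfl
  | cons x _ ih =>
    intro hd
    exact mkW_congr_cons x (ih (fun a ha b hb hab =>
      hd a (List.mem_cons_of_mem _ ha) b (List.mem_cons_of_mem _ hb) hab))
  | swap x y l =>
    intro hd
    by_cases hxy : x = y
    · subst hxy; rfl
    · exact mkW_swap0 (hd y (by simp) x (by simp) (Ne.symm hxy)) l
  | trans h1 _ ih1 ih2 =>
    intro hd
    rw [ih1 hd, ih2 (fun a ha b hb hab => hd a (h1.mem_iff.mpr ha) b (h1.mem_iff.mpr hb) hab)]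

lemma mkW_move_block {a b : Fin (n+1)} :
    ∀ {l : List (Fin (n+1))} (w : List (Fin (n+1))),
    (∀ c ∈ l, Distant c a ∧ Distant c b) →
    mkW (l ++ a :: b :: w) = mkW (a :: b :: (l ++ w)) := by
  intro l
  induction l with
  | nil => intro w _; rfl
  | cons h t ih =>
    intro w hd
    calc mkW ((h :: t) ++ a :: b :: w) = mkW (h :: (t ++ a :: b :: w)) := rfl
    _ = mkW (h :: a :: b :: (t ++ w)) :=
        mkW_congr_cons h (ih w (fun c hc => hd c (List.mem_cons_of_mem _ hc)))
    _ = mkW (a :: h :: b :: (t ++ w)) :=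
        mkW_swap0 ((hd h (List.mem_cons_self)).1) _
    _ = mkW (a :: b :: h :: (t ++ w)) :=
        mkW_swap ((hd h (List.mem_cons_self)).2) [a] _
    _ = mkW (a :: b :: ((h :: t) ++ w)) := rfl

end Basic2
section Col
variable {n : ℕ}

/-- the concatenated word of a list of columns -/
def cfWord (L : List (Finset (Fin (n+1)))) : List (Fin (n+1)) :=
  (L.map fun s => s.sort (· ≤ ·)).flatten

lemma cfWord_nil : cfWord ([] : List (Finset (Fin (n+1)))) = [] := rfl

lemma cfWord_cons (s : Finset (Fin (n+1))) (L : List (Finset (Fin (n+1)))) :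
    cfWord (s :: L) = s.sort (· ≤ ·) ++ cfWord L := rfl

lemma cfWord_append (L1 L2 : List (Finset (Fin (n+1)))) :
    cfWord (L1 ++ L2) = cfWord L1 ++ cfWord L2 := by
  simp [cfWord]

lemma prod_colProd (L : List (Finset (Fin (n+1)))) :
    (L.map colProd).prod = mkW (cfWord L) := by
  induction L with
  | nil => rfl
  | cons s L ih => rw [List.map_cons, List.prod_cons, cfWord_cons, mkW_append, ih]; rfl

lemma cfWord_decomp (L : List (Finset (Fin (n+1)))) (i : ℕ) (hi : i < L.length) :
    cfWord L = cfWord (L.take i) ++ (L[i].sort (· ≤ ·) ++ cfWord (L.drop (i+1))) := by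
  conv_lhs => rw [← List.take_append_drop i L]
  rw [cfWord_append, List.drop_eq_getElem_cons hi, cfWord_cons]

lemma col_front {s : Finset (Fin (n+1))} (hg : ∀ a ∈ s, ∀ b ∈ s, a ≠ b → Distant a b)
    {j : Fin (n+1)} (hj : j ∈ s) :
    mkW (s.sort (· ≤ ·)) = mkW (j :: (s.erase j).sort (· ≤ ·)) := by
  apply mkW_perm
  · rw [List.perm_ext_iff_of_nodup (s.sort_nodup _) ?_]
    · intro a
      simp only [Finset.mem_sort, List.mem_cons, Finset.mem_erase]
      constructor
      · intro ha
        by_cases h : a = j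
        · exact Or.inl h
        · exact Or.inr ⟨h, ha⟩
      · rintro (rfl | ⟨_, ha⟩)
        · exact hj
        · exact ha
    · exact List.Nodup.cons (by simp) ((s.erase j).sort_nodup _)
  · intro a ha b hb hab
    exact hg a (Finset.mem_sort _ |>.mp ha) b (Finset.mem_sort _ |>.mp hb) hab

lemma col_back {s : Finset (Fin (n+1))} (hg : ∀ a ∈ s, ∀ b ∈ s, a ≠ b → Distant a b)
    {j : Fin (n+1)} (hj : j ∈ s) :
    mkW (s.sort (· ≤ ·)) = mkW ((s.erase j).sort (· ≤ ·) ++ [j]) := by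
  rw [col_front hg hj, mkW_move]
  intro c hc
  rw [Finset.mem_sort] at hc
  exact hg c (Finset.mem_of_mem_erase hc) j hj (Finset.ne_of_mem_erase hc)

lemma erase_distant {s : Finset (Fin (n+1))} (hg : ∀ a ∈ s, ∀ b ∈ s, a ≠ b → Distant a b)
    {j : Fin (n+1)} (hj : j ∈ s) : ∀ c ∈ (s.erase j).sort (· ≤ ·), Distant c j := by
  intro c hc
  rw [Finset.mem_sort] at hc
  exact hg c (Finset.mem_of_mem_erase hc) j hj (Finset.ne_of_mem_erase hc)

end Col
section Alg
variable {k : Type*} [CommRing k] {n : ℕ} (p : Params k)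

lemma algWord_eq (u : List (Fin (n+1))) : algWord p u = (u.map (gen p)).prod := by
  unfold algWord wordProd gen
  rw [map_list_prod, List.map_map]
  rfl

lemma gen_comm {i j : Fin (n+1)} (h : Distant i j) : gen p i * gen p j = gen p j * gen p i := by
  rcases h with h | h
  · have := RingQuot.mkAlgHom_rel k (SBRel.comm (p := p) i j h)
    simp only [gen]; simp only [map_mul] at this; exact this
  · have := RingQuot.mkAlgHom_rel k (SBRel.comm (p := p) j i h)
    simp only [gen]; simp only [map_mul] at this; exact this.symm

/-- commutation-equivalent words have equal images in the algebra -/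
lemma algWord_eq_of_mkW_eq {u v : List (Fin (n+1))} (h : mkW u = mkW v) :
    algWord p u = algWord p v := by
  set φ : FreeMonoid (Fin (n+1)) →* SBAlg k n p := FreeMonoid.lift (gen p) with hφ
  have key : ∀ w : List (Fin (n+1)), φ (FreeMonoid.ofList w) = algWord p w := by
    intro w
    rw [algWord_eq, hφ, FreeMonoid.lift_apply]
    rfl
  have hle : conGen (CommRel n) ≤ Con.ker φ := by
    apply Con.conGen_le.mpr
    rintro x y ⟨i, j, hd, rfl, rfl⟩
    show φ _ = φ _
    rw [map_mul, map_mul]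
    simp only [hφ, FreeMonoid.lift_eval_of]
    exact gen_comm p hd
  have := hle ((Con.eq _).mp h)
  rw [← key u, ← key v]
  exact this

/-- commutation-equivalent words have equal length -/
lemma length_eq_of_mkW_eq {u v : List (Fin (n+1))} (h : mkW u = mkW v) :
    u.length = v.length := by
  set ψ : FreeMonoid (Fin (n+1)) →* Multiplicative ℕ :=
    FreeMonoid.lift (fun _ => Multiplicative.ofAdd 1) with hψ
  have key : ∀ w : List (Fin (n+1)), ψ (FreeMonoid.ofList w) = Multiplicative.ofAdd w.length := by
    intro w
    induction w with
    | nil => simp [hψ]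
    | cons a t ih =>
      have : FreeMonoid.ofList (a :: t) = FreeMonoid.of a * FreeMonoid.ofList t := rfl
      rw [this, map_mul, ih, hψ]
      simp only [FreeMonoid.lift_eval_of]
      rw [← ofAdd_add]
      congr 1
      simp [Nat.add_comm]
  have hle : conGen (CommRel n) ≤ Con.ker ψ := by
    apply Con.conGen_le.mpr
    rintro x y ⟨i, j, hd, rfl, rfl⟩
    show ψ _ = ψ _
    rw [map_mul, map_mul, mul_comm]
  have := hle ((Con.eq _).mp h)
  have h2 : Multiplicative.ofAdd u.length = Multiplicative.ofAdd v.length := by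
    rw [← key u, ← key v]; exact this
  exact Multiplicative.ofAdd.injective h2
end Alg
section Patterns
variable {k : Type*} [CommRing k] {n : ℕ} (p : Params k)

lemma gen_sq (a : Fin (n+1)) : ∃ c : k, gen p a * gen p a = c • gen p a := by
  by_cases h0 : a.val = 0
  · refine ⟨p.δL, ?_⟩
    have ha : a = 0 := Fin.ext (by simpa using h0)
    subst ha
    have := RingQuot.mkAlgHom_rel k (SBRel.left_sq (p := p) (n := n))
    simp only [gen]; simp only [map_mul, map_smul] at this; exact this
  by_cases hnn : a.val = n
  · refine ⟨p.δR, ?_⟩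
    have ha : a = Fin.last n := Fin.ext (by simpa using hnn)
    subst ha
    have := RingQuot.mkAlgHom_rel k (SBRel.right_sq (p := p) (n := n))
    simp only [gen]; simp only [map_mul, map_smul] at this; exact this
  · refine ⟨p.δ, ?_⟩
    have := RingQuot.mkAlgHom_rel k
      (SBRel.mid_sq (p := p) a (by omega) (by have := a.isLt; omega))
    simp only [gen]; simp only [map_mul, map_smul] at this; exact this

lemma gen_braid {a b : Fin (n+1)} (hab : Adj a b) (hb0 : b.val ≠ 0) (hbn : b.val ≠ n) :
    ∃ c : k, gen p b * gen p a * gen p b = c • gen p b := by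
  have hblt := b.isLt
  have halt := a.isLt
  rcases hab with h | h
  · by_cases ha0 : a.val = 0
    · refine ⟨p.κL, ?_⟩
      have := RingQuot.mkAlgHom_rel k (SBRel.left_braid (p := p) b a (by omega) ha0)
      simp only [gen]; simp only [map_mul, map_smul] at this; exact this
    · refine ⟨1, ?_⟩
      rw [one_smul]
      have := RingQuot.mkAlgHom_rel k (SBRel.braid_down (p := p) a b h (by omega) (by omega))
      simp only [gen]; simp only [map_mul, map_smul] at this; exact this
  · by_cases han : a.val = n
    · refine ⟨p.κR, ?_⟩
      have := RingQuot.mkAlgHom_rel k (SBRel.right_braid (p := p) b a (by omega) han)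
      simp only [gen]; simp only [map_mul, map_smul] at this; exact this
    · refine ⟨1, ?_⟩
      rw [one_smul]
      have := RingQuot.mkAlgHom_rel k (SBRel.braid_up (p := p) b a h (by omega) (by omega))
      simp only [gen]; simp only [map_mul, map_smul] at this; exact this

lemma algWord_pattern {pat pat' : List (Fin (n+1))} (w1 w2 : List (Fin (n+1))) (c : k)
    (h : (pat.map (gen p)).prod = c • (pat'.map (gen p)).prod) :
    algWord p (w1 ++ (pat ++ w2)) = c • algWord p (w1 ++ (pat' ++ w2)) := by
  simp only [algWord_eq, List.map_append, List.prod_append, h]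
  rw [smul_mul_assoc, mul_smul_comm]

lemma not_reduced_sq (a : Fin (n+1)) (w1 w2 : List (Fin (n+1))) :
    ¬ Reduced p (w1 ++ a :: a :: w2) := by
  intro hr
  obtain ⟨c, hc⟩ := gen_sq p a
  refine hr (w1 ++ a :: w2) c (by simp) ?_
  have h1 : w1 ++ a :: a :: w2 = w1 ++ ([a, a] ++ w2) := by simp
  have h2 : w1 ++ a :: w2 = w1 ++ ([a] ++ w2) := by simp
  rw [h1, h2]
  apply algWord_pattern
  simpa [mul_assoc] using hc

lemma not_reduced_bab {a b : Fin (n+1)} (hab : Adj a b) (hb0 : b.val ≠ 0) (hbn : b.val ≠ n)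
    (w1 w2 : List (Fin (n+1))) : ¬ Reduced p (w1 ++ b :: a :: b :: w2) := by
  intro hr
  obtain ⟨c, hc⟩ := gen_braid p hab hb0 hbn
  refine hr (w1 ++ b :: w2) c (by simp) ?_
  have h1 : w1 ++ b :: a :: b :: w2 = w1 ++ ([b, a, b] ++ w2) := by simp
  have h2 : w1 ++ b :: w2 = w1 ++ ([b] ++ w2) := by simp
  rw [h1, h2]
  apply algWord_pattern
  simpa [mul_assoc] using hc

lemma reduced_transfer {u v : List (Fin (n+1))} (hu : Reduced p u) (h : mkW u = mkW v) :
    Reduced p v := by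
  intro w c hl
  rw [← algWord_eq_of_mkW_eq p h, ← length_eq_of_mkW_eq h] at *
  exact hu w c hl
end Patterns
section Move
variable {n : ℕ}

lemma mkW_congr_left {l l' : List (Fin (n+1))} (h : mkW l = mkW l') (w : List (Fin (n+1))) :
    mkW (l ++ w) = mkW (l' ++ w) := by
  rw [mkW_append, mkW_append, h]

lemma mkW_move_one {a : Fin (n+1)} :
    ∀ {l : List (Fin (n+1))} (w : List (Fin (n+1))), (∀ c ∈ l, Distant c a) →
    mkW (l ++ a :: w) = mkW (a :: (l ++ w)) := by
  intro l
  induction l with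
  | nil => intro w _; rfl
  | cons h t ih =>
    intro w hd
    calc mkW ((h :: t) ++ a :: w) = mkW (h :: (t ++ a :: w)) := rfl
    _ = mkW (h :: a :: (t ++ w)) :=
        mkW_congr_cons h (ih w (fun c hc => hd c (List.mem_cons_of_mem _ hc)))
    _ = mkW (a :: h :: (t ++ w)) := mkW_swap0 (hd h (List.mem_cons_self)) _
    _ = mkW (a :: ((h :: t) ++ w)) := rfl

lemma take_succ_eq {α : Type*} (L : List α) (i : ℕ) (hi : i < L.length) :
    L.take (i+1) = L.take i ++ [L[i]] := by
  rw [← List.take_concat_get, List.concat_eq_append]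
end Move
section Block
variable {k : Type*} [CommRing k] {n : ℕ}

lemma cfWord_singleton (s : Finset (Fin (n+1))) : cfWord [s] = s.sort (· ≤ ·) := by
  simp [cfWord]

lemma adj_of_not_distant {a b : Fin (n+1)} (hne : a ≠ b) (h : ¬ Distant a b) : Adj a b := by
  unfold Distant at h
  unfold Adj
  have : a.val ≠ b.val := fun hv => hne (Fin.ext hv)
  omega

lemma stepM {x : CMon n} {A B m m' : List (Fin (n+1))}
    (hx : x = mkW (A ++ (m ++ B))) (h : mkW m = mkW m') : x = mkW (A ++ (m' ++ B)) := by
  rw [hx, mkW_congr_append A (mkW_congr_left h B)]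

lemma block (p : Params k) (x : CMon n)
    (hR : ∀ w, x = mkW w → Reduced p w) (hnl : ¬ LeftReducible x)
    (L : List (Finset (Fin (n+1)))) (hg : ∀ s ∈ L, GoodCol s)
    (hch : L.Chain' (fun s t => ∀ j ∈ t, ∃ i ∈ s, ¬ Distant i j)) :
    ∀ i (hi : i < L.length) (a b : Fin (n+1)) (rest : List (Fin (n+1))),
      a ∈ L[i] → Adj a b → b.val ≠ 0 → b.val ≠ n →
      (∀ c ∈ L[i], c ≠ a → Distant c b) →
      x = mkW (cfWord (L.take (i+1)) ++ b :: rest) → False := by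
  intro i
  induction i with
  | zero =>
    intro hi a b rest ha hab hb0 hbn huniq hx
    set T := ((L[0]'hi).erase a).sort (· ≤ ·) with hT
    have hgood := (hg _ (L.getElem_mem hi)).2
    have hTa : ∀ c ∈ T, Distant c a := erase_distant hgood ha
    have hTb : ∀ c ∈ T, Distant c b := fun c hc =>
      huniq c (Finset.mem_of_mem_erase ((Finset.mem_sort _).mp hc))
        (Finset.ne_of_mem_erase ((Finset.mem_sort _).mp hc))
    have e1 : cfWord (L.take 1) = (L[0]'hi).sort (· ≤ ·) := by
      rw [take_succ_eq L 0 hi]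
      simpa using cfWord_singleton (L[0]'hi)
    have hx1 : x = mkW ([] ++ ((L[0]'hi).sort (· ≤ ·) ++ (b :: rest))) := by
      rw [hx, e1]; rfl
    have hx2 : x = mkW ([] ++ ((T ++ [a]) ++ (b :: rest))) :=
      stepM hx1 (col_back hgood ha)
    have hx3 : x = mkW (T ++ (a :: b :: rest)) := by
      rw [hx2]; exact congrArg mkW (by first | rfl | simp)
    have hx4 : x = mkW (a :: b :: (T ++ rest)) := by
      rw [hx3, mkW_move_block rest (fun c hc => ⟨hTa c hc, hTb c hc⟩)]
    exact hnl ⟨a, b, T ++ rest, hab, fun e => hb0 (by rw [e]; rfl),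
      fun e => hbn (by rw [e]; rfl), hx4⟩
  | succ i' ih =>
    intro hi a b rest ha hab hb0 hbn huniq hx
    have hi' : i' < L.length := by omega
    set T := ((L[i'+1]'hi).erase a).sort (· ≤ ·) with hT
    have hgood := (hg _ (L.getElem_mem hi)).2
    have hgood' := (hg _ (L.getElem_mem hi')).2
    have hTa : ∀ c ∈ T, Distant c a := erase_distant hgood ha
    have hTb : ∀ c ∈ T, Distant c b := fun c hc =>
      huniq c (Finset.mem_of_mem_erase ((Finset.mem_sort _).mp hc))
        (Finset.ne_of_mem_erase ((Finset.mem_sort _).mp hc))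
    set Q := cfWord (L.take i') with hQ
    set S' := (L[i']'hi').sort (· ≤ ·) with hS'
    have e1 : cfWord (L.take (i'+2)) = (Q ++ S') ++ (L[i'+1]'hi).sort (· ≤ ·) := by
      rw [take_succ_eq L (i'+1) hi, take_succ_eq L i' hi', cfWord_append, cfWord_append,
        cfWord_singleton, cfWord_singleton]
    have hx1 : x = mkW ((Q ++ S') ++ ((L[i'+1]'hi).sort (· ≤ ·) ++ (b :: rest))) := by
      rw [hx, e1]; exact congrArg mkW (by first | rfl | simp)
    have hx2 : x = mkW ((Q ++ S') ++ ((T ++ [a]) ++ (b :: rest))) :=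
      stepM hx1 (col_back hgood ha)
    have hx3 : x = mkW ((Q ++ S') ++ (T ++ (a :: b :: rest))) := by
      rw [hx2]; exact congrArg mkW (by first | rfl | simp)
    -- chain condition between columns i' and i'+1 applied to `a`
    have hchain := (List.isChain_iff_getElem.mp hch) i' (by omega)
    obtain ⟨h, hhmem, hhnd⟩ := hchain a ha
    by_cases haL : a ∈ L[i']'hi'
    · -- square pattern a ⋯ a
      set T' := ((L[i']'hi').erase a).sort (· ≤ ·) with hT'
      have hy1 : x = mkW (Q ++ (S' ++ (T ++ (a :: b :: rest)))) := by
        rw [hx3]; exact congrArg mkW (by first | rfl | simp)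
      have hy2 : x = mkW (Q ++ ((T' ++ [a]) ++ (T ++ (a :: b :: rest)))) :=
        stepM hy1 (col_back hgood' haL)
      have hy3 : x = mkW ((Q ++ T') ++ [a] ++ (T ++ (a :: b :: rest))) := by
        rw [hy2]; exact congrArg mkW (by first | rfl | simp)
      have hy4 : x = mkW ((Q ++ T') ++ [a] ++ (a :: (T ++ (b :: rest)))) := by
        have := mkW_move_one (b :: rest) hTa
        rw [hy3, mkW_congr_append ((Q ++ T') ++ [a]) this]
      have hy5 : x = mkW ((Q ++ T') ++ (a :: a :: (T ++ (b :: rest)))) := by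
        rw [hy4]; exact congrArg mkW (by first | rfl | simp)
      exact not_reduced_sq p a _ _ (hR _ hy5)
    · by_cases hbL : b ∈ L[i']'hi'
      · -- braid pattern b a b
        set T'' := ((L[i']'hi').erase b).sort (· ≤ ·) with hT''
        have hy1 : x = mkW (Q ++ (S' ++ (T ++ (a :: b :: rest)))) := by
          rw [hx3]; exact congrArg mkW (by first | rfl | simp)
        have hy2 : x = mkW (Q ++ ((T'' ++ [b]) ++ (T ++ (a :: b :: rest)))) :=
          stepM hy1 (col_back hgood' hbL)
        have hmv : mkW (T ++ (b :: (a :: b :: rest)))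
            = mkW (b :: (T ++ (a :: b :: rest))) := mkW_move_one (a :: b :: rest) hTb
        have hy3a : x = mkW ((Q ++ T'') ++ (b :: (T ++ (a :: b :: rest)))) := by
          rw [hy2]; exact congrArg mkW (by simp)
        have hy3 : x = mkW ((Q ++ T'') ++ (T ++ (b :: a :: b :: rest))) := by
          rw [hy3a, mkW_congr_append (Q ++ T'') hmv.symm]
        have hy4 : x = mkW (((Q ++ T'') ++ T) ++ (b :: a :: b :: rest)) := by
          rw [hy3]; exact congrArg mkW (by first | rfl | simp)
        exact not_reduced_bab p hab hb0 hbn _ _ (hR _ hy4)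
      · -- recurse to column i'
        have hha : h ≠ a := fun e => haL (e ▸ hhmem)
        have hhb : h ≠ b := fun e => hbL (e ▸ hhmem)
        have hadj : Adj h a := adj_of_not_distant hha hhnd
        have hvb : h.val ≠ b.val := fun e => hhb (Fin.ext e)
        have hblt := b.isLt
        have hhlt := h.isLt
        have halt := a.isLt
        have ha0 : a.val ≠ 0 := by
          intro h0
          rcases hab with hb1 | hb1
          · rcases hadj with h1 | h1
            · omega
            · exact hhb (Fin.ext (by omega))
          · omega
        have han : a.val ≠ n := by
          intro h0
          rcases hab with hb1 | hb1
          · omega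
          · rcases hadj with h1 | h1
            · exact hhb (Fin.ext (by omega))
            · omega
        have huniq' : ∀ c ∈ L[i']'hi', c ≠ h → Distant c a := by
          intro c hc hch0
          by_contra hnd
          have hca : c ≠ a := fun e => haL (e ▸ hc)
          have hcb : c ≠ b := fun e => hbL (e ▸ hc)
          have hcadj : Adj c a := adj_of_not_distant hca hnd
          have hcv : c.val = h.val ∨ c.val = b.val := by
            unfold Adj at hcadj hadj hab
            omega
          rcases hcv with e | e
          · exact hch0 (Fin.ext e)
          · exact hcb (Fin.ext e)
        have hx4 : x = mkW (cfWord (L.take (i'+1)) ++ a :: (T ++ (b :: rest))) := by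
          have hmv : mkW (T ++ (a :: (b :: rest)))
              = mkW (a :: (T ++ (b :: rest))) := mkW_move_one (b :: rest) hTa
          rw [take_succ_eq L i' hi', cfWord_append, cfWord_singleton, hx3,
            mkW_congr_append (Q ++ S') hmv]
        exact ih hi' h a (T ++ (b :: rest)) hhmem hadj ha0 han huniq' hx4
end Block

/-- Suppose `x ∈ M` corresponds to a reduced monomial with Cartier–Foata normal form
`s_1 ⋯ s_p`, and `x` is not left reducible.  Then for `1 ≤ i < p`: (i) if `E_0` occurs
in `s_{i+1}` then `E_1` occurs in `s_i`; (ii) if `E_n` occurs in `s_{i+1}` then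
`E_{n-1}` occurs in `s_i`; (iii) if `0 < j < n` and `E_j` occurs in `s_{i+1}`, then both
`E_{j-1}` and `E_{j+1}` occur in `s_i`. -/
theorem cf_occurrence_propagation {k : Type*} [Field k] {n : ℕ} (hn : 1 ≤ n)
    (p : Params k) (x : CMon n) (hred : ReducedM p x) (hnl : ¬ LeftReducible x)
    (L : List (Finset (Fin (n + 1)))) (hcf : IsCF L)
    (hprod : (L.map colProd).prod = x) :
    ∀ (i : ℕ) (hi : i + 1 < L.length),
      ((0 : Fin (n + 1)) ∈ L[i + 1]'hi →
        ∃ g ∈ L[i]'(Nat.lt_of_succ_lt hi), g.val = 1) ∧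
      (Fin.last n ∈ L[i + 1]'hi →
        ∃ g ∈ L[i]'(Nat.lt_of_succ_lt hi), g.val + 1 = n) ∧
      (∀ j : Fin (n + 1), 0 < j.val → j.val < n → j ∈ L[i + 1]'hi →
        (∃ g ∈ L[i]'(Nat.lt_of_succ_lt hi), g.val + 1 = j.val) ∧
        (∃ g ∈ L[i]'(Nat.lt_of_succ_lt hi), g.val = j.val + 1)) := by
  obtain ⟨u0, hu0x, hu0r⟩ := hred
  obtain ⟨hgL, hch⟩ := hcf
  have hxw : x = mkW (cfWord L) := by rw [← hprod, prod_colProd]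
  have hR : ∀ w, x = mkW w → Reduced p w := fun w hw =>
    reduced_transfer p hu0r (hu0x.trans hw)
  -- no generator occurs in two consecutive columns
  have no_repeat : ∀ (i : ℕ) (hi : i + 1 < L.length) (c : Fin (n+1)),
      c ∈ L[i]'(Nat.lt_of_succ_lt hi) → c ∈ L[i+1]'hi → False := by
    intro i hi c hc1 hc2
    have hiL : i < L.length := Nat.lt_of_succ_lt hi
    set T1 := ((L[i+1]'hi).erase c).sort (· ≤ ·) with hT1
    set Ti := ((L[i]'hiL).erase c).sort (· ≤ ·) with hTi
    set D := cfWord (L.drop (i+2)) with hD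
    have hgood := (hgL _ (L.getElem_mem hi)).2
    have hgood' := (hgL _ (L.getElem_mem hiL)).2
    have h1 : x = mkW (cfWord (L.take (i+1)) ++ ((L[i+1]'hi).sort (· ≤ ·) ++ D)) := by
      rw [hxw, cfWord_decomp L (i+1) hi]
    have h2 : x = mkW (cfWord (L.take (i+1)) ++ ((c :: T1) ++ D)) :=
      stepM h1 (col_front hgood hc2)
    have h3 : x = mkW (cfWord (L.take i) ++ ((L[i]'hiL).sort (· ≤ ·) ++ ((c :: T1) ++ D))) := by
      rw [h2, take_succ_eq L i hiL, cfWord_append, cfWord_singleton]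
      exact congrArg mkW (by simp)
    have h4 : x = mkW (cfWord (L.take i) ++ ((Ti ++ [c]) ++ ((c :: T1) ++ D))) :=
      stepM h3 (col_back hgood' hc1)
    have h5 : x = mkW ((cfWord (L.take i) ++ Ti) ++ (c :: c :: (T1 ++ D))) := by
      rw [h4]; exact congrArg mkW (by simp)
    exact not_reduced_sq p c _ _ (hR _ h5)
  intro i hi
  have hiL : i < L.length := Nat.lt_of_succ_lt hi
  have hchain := (List.isChain_iff_getElem.mp hch) i (by omega)
  have hgood := (hgL _ (L.getElem_mem hi)).2
  refine ⟨?_, ?_, ?_⟩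
  · -- part (i)
    intro h0mem
    obtain ⟨g, hgm, hgnd⟩ := hchain 0 h0mem
    have hglt := g.isLt
    have hgne : g ≠ 0 := fun e => no_repeat i hi 0 (e ▸ hgm) h0mem
    have hgv : g.val ≠ 0 := fun e => hgne (Fin.ext (by simpa using e))
    refine ⟨g, hgm, ?_⟩
    unfold Distant at hgnd
    simp only [Fin.val_zero] at hgnd
    omega
  · -- part (ii)
    intro hlmem
    obtain ⟨g, hgm, hgnd⟩ := hchain (Fin.last n) hlmem
    have hglt := g.isLt
    have hgne : g ≠ Fin.last n := fun e => no_repeat i hi (Fin.last n) (e ▸ hgm) hlmem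
    have hgv : g.val ≠ n := fun e => hgne (Fin.ext (by simpa using e))
    refine ⟨g, hgm, ?_⟩
    unfold Distant at hgnd
    simp only [Fin.val_last] at hgnd
    omega
  · -- part (iii)
    intro j hj0 hjn hjmem
    set T1 := ((L[i+1]'hi).erase j).sort (· ≤ ·) with hT1
    set D := cfWord (L.drop (i+2)) with hD
    have h1 : x = mkW (cfWord (L.take (i+1)) ++ ((L[i+1]'hi).sort (· ≤ ·) ++ D)) := by
      rw [hxw, cfWord_decomp L (i+1) hi]
    have h2 : x = mkW (cfWord (L.take (i+1)) ++ ((j :: T1) ++ D)) :=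
      stepM h1 (col_front hgood hjmem)
    have h3 : x = mkW (cfWord (L.take (i+1)) ++ j :: (T1 ++ D)) := by
      rw [h2]; exact congrArg mkW (by simp)
    obtain ⟨g, hgm, hgnd⟩ := hchain j hjmem
    have hglt := g.isLt
    have hjne : g ≠ j := fun e => no_repeat i hi j (e ▸ hgm) hjmem
    have gadj : Adj g j := adj_of_not_distant hjne hgnd
    constructor
    · by_contra hno
      push_neg at hno
      have hgv : g.val = j.val + 1 := by
        rcases gadj with h1' | h1'
        · exact absurd h1' (hno g hgm)
        · omega
      have huniq : ∀ c ∈ L[i]'hiL, c ≠ g → Distant c j := by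
        intro c hc hcg
        by_contra hnd
        have hcj : c ≠ j := fun e => no_repeat i hi j (e ▸ hc) hjmem
        have hcadj : Adj c j := adj_of_not_distant hcj hnd
        rcases hcadj with h1' | h1'
        · exact hno c hc h1'
        · exact hcg (Fin.ext (by omega))
      exact absurd (block p x hR hnl L hgL hch i hiL g j (T1 ++ D) hgm gadj
        (by omega) (by omega) huniq h3) (fun f => f)
    · by_contra hno
      push_neg at hno
      have hgv : g.val + 1 = j.val := by
        rcases gadj with h1' | h1'
        · exact h1'
        · exact absurd h1'.symm (hno g hgm)
      have huniq : ∀ c ∈ L[i]'hiL, c ≠ g → Distant c j := by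
        intro c hc hcg
        by_contra hnd
        have hcj : c ≠ j := fun e => no_repeat i hi j (e ▸ hc) hjmem
        have hcadj : Adj c j := adj_of_not_distant hcj hnd
        rcases hcadj with h1' | h1'
        · exact hcg (Fin.ext (by omega))
        · exact hno c hc h1'.symm
      exact absurd (block p x hR hnl L hgL hch i hiL g j (T1 ++ D) hgm gadj
        (by omega) (by omega) huniq h3) (fun f => f)
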